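/- Let d ≥ 1 be an integer and let a, b, c, A₀, β₁, β₂ be real numbers with β₁ ≥ max{|b|, a} and β₂ ≥ max{|b|, c}. Define on real d×d matrices the functions F_B(Q) = (a/2)⟨Q,Q⟩_F − (b/3)⟨Q², Q⟩_F + (c/4)(⟨Q,Q⟩_F)² + A₀, F₁(Q) = (β₁/2)⟨Q,Q⟩_F − (b/3)⟨Q², Q⟩_F + (β₂/4)(⟨Q,Q⟩_F)² + A₀, and F₂(Q) = ((β₁−a)/2)⟨Q,Q⟩_F + ((β₂−c)/4)(⟨Q,Q⟩_F)². Then F_B(Q) = F₁(Q) − F₂(Q) for all Q, and both F₁ and F₂ are convex functions on the space of real d×d matrices. -/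
import Mathlib


open Matrix

/-- Frobenius inner product of two real `d × d` matrices: `⟨A, B⟩_F = tr(Aᵀ B)`. -/
noncomputable def frobInner {d : ℕ} (A B : Matrix (Fin d) (Fin d) ℝ) : ℝ :=
  (Aᵀ * B).trace

variable {d : ℕ}

lemma frobInner_apply (A B : Matrix (Fin d) (Fin d) ℝ) :
    frobInner A B = ∑ j, ∑ i, A i j * B i j := by
  simp [frobInner, Matrix.trace, Matrix.mul_apply, Matrix.diag, Matrix.transpose_apply]

lemma frobInner_comm (A B : Matrix (Fin d) (Fin d) ℝ) : frobInner A B = frobInner B A := by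
  simp [frobInner_apply, mul_comm]

lemma frobInner_add_left (A B C : Matrix (Fin d) (Fin d) ℝ) :
    frobInner (A + B) C = frobInner A C + frobInner B C := by
  simp [frobInner_apply, add_mul, Finset.sum_add_distrib]

lemma frobInner_add_right (A B C : Matrix (Fin d) (Fin d) ℝ) :
    frobInner A (B + C) = frobInner A B + frobInner A C := by
  simp [frobInner_apply, mul_add, Finset.sum_add_distrib]

lemma frobInner_smul_left (t : ℝ) (A B : Matrix (Fin d) (Fin d) ℝ) :
    frobInner (t • A) B = t * frobInner A B := by
  simp [frobInner_apply, Finset.mul_sum, mul_assoc]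

lemma frobInner_smul_right (t : ℝ) (A B : Matrix (Fin d) (Fin d) ℝ) :
    frobInner A (t • B) = t * frobInner A B := by
  simp only [frobInner_apply, Matrix.smul_apply, smul_eq_mul, Finset.mul_sum]
  exact Finset.sum_congr rfl fun j _ => Finset.sum_congr rfl fun i _ => by ring

lemma frobInner_self_nonneg (A : Matrix (Fin d) (Fin d) ℝ) : 0 ≤ frobInner A A := by
  rw [frobInner_apply]
  exact Finset.sum_nonneg fun j _ => Finset.sum_nonneg fun i _ => mul_self_nonneg _

lemma frobInner_sq_le (A B : Matrix (Fin d) (Fin d) ℝ) :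
    (frobInner A B) ^ 2 ≤ frobInner A A * frobInner B B := by
  simp only [frobInner_apply]
  have h := Finset.sum_mul_sq_le_sq_mul_sq (Finset.univ : Finset (Fin d × Fin d))
    (fun p => A p.2 p.1) (fun p => B p.2 p.1)
  simpa [Fintype.sum_prod_type, sq] using h

lemma frobInner_mul_self_le (A B : Matrix (Fin d) (Fin d) ℝ) :
    frobInner (A * B) (A * B) ≤ frobInner A A * frobInner B B := by
  simp only [frobInner_apply, Matrix.mul_apply]
  calc ∑ j, ∑ i, (∑ k, A i k * B k j) * (∑ k, A i k * B k j)
      ≤ ∑ j, ∑ i, (∑ k, A i k * A i k) * (∑ k, B k j * B k j) := by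
        refine Finset.sum_le_sum fun j _ => Finset.sum_le_sum fun i _ => ?_
        have := Finset.sum_mul_sq_le_sq_mul_sq (Finset.univ : Finset (Fin d))
          (fun k => A i k) (fun k => B k j)
        simpa [sq] using this
    _ = (∑ j, ∑ i, A i j * A i j) * (∑ j, ∑ i, B i j * B i j) := by
        rw [Finset.sum_comm (s := Finset.univ) (t := Finset.univ)
          (f := fun j i => (∑ k, A i k * A i k) * (∑ k, B k j * B k j))]
        rw [← Finset.sum_mul_sum]
        rw [Finset.sum_comm (s := Finset.univ) (t := Finset.univ) (f := fun j i => A i j * A i j)]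


lemma convexOn_quartic (c0 c1 c2 c3 c4 : ℝ)
    (h : ∀ t : ℝ, 0 ≤ 2*c2 + 6*c3*t + 12*c4*t^2) :
    ConvexOn ℝ Set.univ (fun t : ℝ => c0 + c1*t + c2*t^2 + c3*t^3 + c4*t^4) := by
  set g : ℝ → ℝ := fun t => c0 + c1*t + c2*t^2 + c3*t^3 + c4*t^4 with hg
  set g1 : ℝ → ℝ := fun t => c1 + 2*c2*t + 3*c3*t^2 + 4*c4*t^3 with hg1
  have hd1 : ∀ t : ℝ, HasDerivAt g (g1 t) t := by
    intro t
    have : HasDerivAt g (0 + c1*1 + c2*(2*t^1) + c3*(3*t^2) + c4*(4*t^3)) t := by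
      exact ((((hasDerivAt_const t c0).add ((hasDerivAt_id t).const_mul c1)).add
        ((hasDerivAt_pow 2 t).const_mul c2)).add ((hasDerivAt_pow 3 t).const_mul c3)).add
        ((hasDerivAt_pow 4 t).const_mul c4)
    convert this using 1
    simp [hg1]; ring
  have hd2 : ∀ t : ℝ, HasDerivAt g1 (2*c2 + 6*c3*t + 12*c4*t^2) t := by
    intro t
    have : HasDerivAt g1 (0 + 2*c2*1 + 3*c3*(2*t^1) + 4*c4*(3*t^2)) t := by
      exact (((hasDerivAt_const t c1).add ((hasDerivAt_id t).const_mul (2*c2))).add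
        ((hasDerivAt_pow 2 t).const_mul (3*c3))).add ((hasDerivAt_pow 3 t).const_mul (4*c4))
    convert this using 1
    ring
  have hderiv : deriv g = g1 := funext fun t => (hd1 t).deriv
  refine convexOn_of_deriv2_nonneg convex_univ ?_ ?_ ?_ ?_
  · exact (Continuous.continuousOn (by continuity))
  · intro t _; exact (hd1 t).differentiableAt.differentiableWithinAt
  · intro t _; rw [hderiv]; exact (hd2 t).differentiableAt.differentiableWithinAt
  · intro t _
    have : deriv (deriv g) t = 2*c2 + 6*c3*t + 12*c4*t^2 := by
      rw [hderiv]; exact (hd2 t).deriv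
    simp only [Function.iterate_succ, Function.iterate_zero, Function.comp_apply, id]
    rw [this]  -- maybe deriv^[2] unfolds differently
    exact h t

lemma convexOn_of_lines {E : Type*} [AddCommGroup E] [Module ℝ E] (f : E → ℝ)
    (h : ∀ x y : E, ConvexOn ℝ Set.univ (fun t : ℝ => f (x + t • (y - x)))) :
    ConvexOn ℝ Set.univ f := by
  refine ⟨convex_univ, ?_⟩
  intro x _ y _ s t hs ht hst
  have h2 := (h y x).2 (Set.mem_univ (1:ℝ)) (Set.mem_univ (0:ℝ)) hs ht hst
  simp only [smul_eq_mul, mul_one, mul_zero, add_zero, one_smul, zero_smul] at h2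
  have e1 : y + (x - y) = x := by abel
  have e2 : y + (s : ℝ) • (x - y) = s • x + t • y := by
    have : t = 1 - s := by linarith
    rw [this]; module
  rw [e1, e2] at h2
  exact h2

lemma cube_sq_le (A B C : Matrix (Fin d) (Fin d) ℝ) :
    (frobInner (A * B) C) ^ 2 ≤ frobInner A A * frobInner B B * frobInner C C :=
  le_trans (frobInner_sq_le _ _)
    (mul_le_mul_of_nonneg_right (frobInner_mul_self_le A B) (frobInner_self_nonneg C))

lemma key_hessian (b β₁ β₂ : ℝ) (h1 : |b| ≤ β₁) (h2 : |b| ≤ β₂)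
    (Q H : Matrix (Fin d) (Fin d) ℝ) :
    0 ≤ β₁ * frobInner H H
      - 2*b/3 * (frobInner (Q*H) H + frobInner (H*Q) H + frobInner (H*H) Q)
      + β₂ * (frobInner Q Q * frobInner H H + 2 * (frobInner Q H)^2) := by
  set q := frobInner Q Q with hq
  set h := frobInner H H with hh
  have hq0 : 0 ≤ q := frobInner_self_nonneg Q
  have hh0 : 0 ≤ h := frobInner_self_nonneg H
  set s := Real.sqrt q with hs
  have hs0 : 0 ≤ s := Real.sqrt_nonneg q
  have hs2 : s^2 = q := Real.sq_sqrt hq0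
  have bound : ∀ X : ℝ, X^2 ≤ q * h^2 → |X| ≤ s * h := by
    intro X hX
    have h1' : Real.sqrt (X^2) ≤ Real.sqrt (q * h^2) := Real.sqrt_le_sqrt hX
    rwa [Real.sqrt_sq_eq_abs, Real.sqrt_mul hq0, Real.sqrt_sq hh0] at h1'
  have e1 : (frobInner (Q*H) H)^2 ≤ q * h^2 := by
    have := cube_sq_le Q H H; nlinarith [this]
  have e2 : (frobInner (H*Q) H)^2 ≤ q * h^2 := by
    have := cube_sq_le H Q H; nlinarith [this]
  have e3 : (frobInner (H*H) Q)^2 ≤ q * h^2 := by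
    have := cube_sq_le H H Q; nlinarith [this]
  have b1 := abs_le.mp (bound _ e1)
  have b2 := abs_le.mp (bound _ e2)
  have b3 := abs_le.mp (bound _ e3)
  set T := frobInner (Q*H) H + frobInner (H*Q) H + frobInner (H*H) Q with hT
  have hTb : |T| ≤ 3 * (s*h) := by
    rw [abs_le]; constructor <;> [linarith [b1.1, b2.1, b3.1]; linarith [b1.2, b2.2, b3.2]]
  have hbT : |b * T| ≤ |b| * (3*(s*h)) := by
    rw [abs_mul]; exact mul_le_mul_of_nonneg_left hTb (abs_nonneg b)
  have hbT' := abs_le.mp hbT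
  have hb0 : 0 ≤ |b| := abs_nonneg b
  clear_value T s h q
  have A1 : 0 ≤ (β₁ - |b|) * h := mul_nonneg (by linarith) hh0
  have A2 : 0 ≤ (β₂ - |b|) * (q*h) := mul_nonneg (by linarith) (mul_nonneg hq0 hh0)
  have A3 : 0 ≤ |b| * h * (1-s)^2 := mul_nonneg (mul_nonneg hb0 hh0) (sq_nonneg _)
  have A4 : 0 ≤ β₂ * (frobInner Q H)^2 := mul_nonneg (by linarith) (sq_nonneg _)
  have A5 : b * T ≤ |b| * (3*(s*h)) := hbT'.2
  have hqs : |b| * h * (1-s)^2 = |b| * h - 2*(|b| * (s*h)) + |b| * (q*h) := by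
    rw [← hs2]; ring
  rw [hqs] at A3
  linarith

lemma convexOn_F (b β₁ β₂ A₀ : ℝ) (h1 : |b| ≤ β₁) (h2 : |b| ≤ β₂) :
    ConvexOn ℝ Set.univ (fun Q : Matrix (Fin d) (Fin d) ℝ =>
      β₁ / 2 * frobInner Q Q - b / 3 * frobInner (Q * Q) Q
        + β₂ / 4 * (frobInner Q Q) ^ 2 + A₀) := by
  apply convexOn_of_lines
  intro x y
  set H := y - x with hH
  set q00 := frobInner x x with hq00
  set q01 := frobInner x H with hq01
  set q11 := frobInner H H with hq11
  have hfun : (fun t : ℝ =>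
      β₁ / 2 * frobInner (x + t • H) (x + t • H)
        - b / 3 * frobInner ((x + t • H) * (x + t • H)) (x + t • H)
        + β₂ / 4 * (frobInner (x + t • H) (x + t • H)) ^ 2 + A₀)
      = fun t : ℝ =>
        (β₁/2*q00 - b/3*frobInner (x*x) x + β₂/4*q00^2 + A₀)
        + (β₁*q01 - b/3*(frobInner (x*x) H + frobInner (x*H) x + frobInner (H*x) x)
            + β₂*q00*q01) * t
        + (β₁/2*q11 - b/3*(frobInner (x*H) H + frobInner (H*x) H + frobInner (H*H) x)
            + β₂/4*(2*q00*q11 + 4*q01^2)) * t^2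
        + (-(b/3)*frobInner (H*H) H + β₂*q01*q11) * t^3
        + (β₂/4*q11^2) * t^4 := by
    funext t
    simp only [add_mul, mul_add, smul_mul_assoc, mul_smul_comm, smul_smul,
      frobInner_add_left, frobInner_add_right, frobInner_smul_left, frobInner_smul_right,
      frobInner_comm H x, ← hq00, ← hq01, ← hq11]
    ring
  rw [hfun]
  apply convexOn_quartic
  intro t
  have hexp : 2*(β₁/2*q11 - b/3*(frobInner (x*H) H + frobInner (H*x) H + frobInner (H*H) x)
        + β₂/4*(2*q00*q11 + 4*q01^2))
      + 6*(-(b/3)*frobInner (H*H) H + β₂*q01*q11)*t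
      + 12*(β₂/4*q11^2)*t^2
      = β₁ * frobInner H H
      - 2*b/3 * (frobInner ((x + t•H)*H) H + frobInner (H*(x + t•H)) H
          + frobInner (H*H) (x + t•H))
      + β₂ * (frobInner (x + t•H) (x + t•H) * frobInner H H
          + 2 * (frobInner (x + t•H) H)^2) := by
    simp only [add_mul, mul_add, smul_mul_assoc, mul_smul_comm, smul_smul,
      frobInner_add_left, frobInner_add_right, frobInner_smul_left, frobInner_smul_right,
      frobInner_comm H x, ← hq00, ← hq01, ← hq11]
    ring
  rw [hexp]
  exact key_hessian b β₁ β₂ h1 h2 (x + t•H) H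

/-- Convex splitting of the Landau–de Gennes bulk potential: with
`β₁ ≥ max {|b|, a}` and `β₂ ≥ max {|b|, c}`, we have `F_B = F₁ - F₂` with `F₁, F₂` convex. -/

theorem convex_splitting_of_bulk_potential (d : ℕ) (hd : 1 ≤ d)
    (a b c A₀ β₁ β₂ : ℝ) (hβ₁ : max |b| a ≤ β₁) (hβ₂ : max |b| c ≤ β₂) :
    (∀ Q : Matrix (Fin d) (Fin d) ℝ,
      a / 2 * frobInner Q Q - b / 3 * frobInner (Q * Q) Q
          + c / 4 * (frobInner Q Q) ^ 2 + A₀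
        = (β₁ / 2 * frobInner Q Q - b / 3 * frobInner (Q * Q) Q
            + β₂ / 4 * (frobInner Q Q) ^ 2 + A₀)
          - ((β₁ - a) / 2 * frobInner Q Q + (β₂ - c) / 4 * (frobInner Q Q) ^ 2)) ∧
    ConvexOn ℝ Set.univ (fun Q : Matrix (Fin d) (Fin d) ℝ =>
      β₁ / 2 * frobInner Q Q - b / 3 * frobInner (Q * Q) Q
        + β₂ / 4 * (frobInner Q Q) ^ 2 + A₀) ∧
    ConvexOn ℝ Set.univ (fun Q : Matrix (Fin d) (Fin d) ℝ =>
      (β₁ - a) / 2 * frobInner Q Q + (β₂ - c) / 4 * (frobInner Q Q) ^ 2) := by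
  have hb1 : |b| ≤ β₁ := le_trans (le_max_left _ _) hβ₁
  have hb2 : |b| ≤ β₂ := le_trans (le_max_left _ _) hβ₂
  have ha1 : a ≤ β₁ := le_trans (le_max_right _ _) hβ₁
  have hc2 : c ≤ β₂ := le_trans (le_max_right _ _) hβ₂
  refine ⟨fun Q => by ring, convexOn_F b β₁ β₂ A₀ hb1 hb2, ?_⟩
  have heq : (fun Q : Matrix (Fin d) (Fin d) ℝ =>
      (β₁ - a) / 2 * frobInner Q Q + (β₂ - c) / 4 * (frobInner Q Q) ^ 2)
      = fun Q : Matrix (Fin d) (Fin d) ℝ =>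
      (β₁ - a) / 2 * frobInner Q Q - 0 / 3 * frobInner (Q * Q) Q
        + (β₂ - c) / 4 * (frobInner Q Q) ^ 2 + 0 := funext fun Q => by ring
  rw [heq]
  exact convexOn_F 0 (β₁ - a) (β₂ - c) 0 (by simp; linarith) (by simp; linarith)
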